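/- Let c > 0, λ > 0 and μ > 0. The function F(r) = ∫_{r/c}^∞ e^{-(λ+μ)τ} exp((λ/c)√(c²τ² - r²)) / √(c²τ² - r²) dτ, defined for r > 0, tends to 0 as r → ∞, and tends to +∞ as r → 0⁺. -/

import Mathlib

open MeasureTheory Real Set Filter

lemma auxA (c r : ℝ) (hc : 0 < c) :
    IntegrableOn (fun τ : ℝ => ((c*τ - r) ^ (-(1/2) : ℝ))) (Ioc (r/c) (r/c + 1)) := by
  have h0 : IntervalIntegrable (fun x : ℝ => x ^ (-(1/2):ℝ)) volume 0 c :=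
    intervalIntegral.intervalIntegrable_rpow' (by norm_num)
  have h1 := (h0.comp_sub_right r).comp_mul_left (c := c)
  have e1 : (0 + r)/c = r/c := by ring
  have e2 : (c + r)/c = r/c + 1 := by field_simp; ring
  rw [e1, e2] at h1
  exact (intervalIntegrable_iff_integrableOn_Ioc_of_le (by linarith)).mp h1

lemma auxAval (c r : ℝ) (hc : 0 < c) :
    ∫ τ in Ioc (r/c) (r/c + 1), ((c*τ - r) ^ (-(1/2) : ℝ)) = c⁻¹ * (2 * Real.sqrt c) := by
  rw [← intervalIntegral.integral_of_le (by linarith : r/c ≤ r/c + 1)]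
  have : ∀ τ : ℝ, (c*τ - r) ^ (-(1/2):ℝ) = (fun x : ℝ => x ^ (-(1/2):ℝ)) (c*τ + (-r)) := by
    intro τ; simp [sub_eq_add_neg]
  simp_rw [this]
  rw [intervalIntegral.integral_comp_mul_add (fun x : ℝ => x ^ (-(1/2):ℝ)) hc.ne' (-r)]
  have e1 : c * (r/c) + -r = 0 := by field_simp; ring
  have e2 : c * (r/c + 1) + -r = c := by field_simp; ring
  rw [e1, e2, integral_rpow (Or.inl (by norm_num))]
  rw [smul_eq_mul]
  norm_num
  left
  rw [← Real.sqrt_eq_rpow]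
  ring

lemma auxG (c mu r : ℝ) (hc : 0 < c) (hmu : 0 < mu) (hr : 0 < r) :
    IntegrableOn (fun τ => Real.exp (-(mu/2) * τ) / Real.sqrt (c * τ - r)) (Ioi (r/c)) ∧
    ∫ τ in Ioi (r/c), Real.exp (-(mu/2) * τ) / Real.sqrt (c * τ - r)
      ≤ c⁻¹ * (2 * Real.sqrt c) + (Real.sqrt c)⁻¹ * (2/mu) := by
  have ha : 0 < r / c := div_pos hr hc
  set a := r / c with ha_def
  set g : ℝ → ℝ := fun τ => Real.exp (-(mu/2) * τ) / Real.sqrt (c * τ - r) with hg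
  have hmeas : Measurable g := by
    apply Measurable.div
    · fun_prop
    · exact (measurable_const.mul measurable_id').sub_const r |>.sqrt
  have hbound_near : ∀ τ ∈ Ioc a (a+1), g τ ≤ (c*τ - r) ^ (-(1/2):ℝ) := by
    intro τ hτ
    have h1 : 0 < c * τ - r := by
      have := hτ.1
      have : r < c * τ := by rw [ha_def] at this; rw [div_lt_iff₀ hc] at this; linarith [this]
      linarith
    have h2 : (c*τ - r) ^ (-(1/2):ℝ) = (Real.sqrt (c*τ - r))⁻¹ := by
      rw [Real.rpow_neg h1.le, Real.sqrt_eq_rpow]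
    rw [h2, hg]
    simp only
    rw [div_eq_mul_inv]
    have h3 : Real.exp (-(mu/2) * τ) ≤ 1 := by
      rw [Real.exp_le_one_iff]
      have : 0 < τ := lt_trans ha hτ.1
      nlinarith
    nlinarith [inv_nonneg.mpr (Real.sqrt_nonneg (c*τ - r))]
  have hnear : IntegrableOn g (Ioc a (a+1)) := by
    apply Integrable.mono' (auxA c r hc) hmeas.aestronglyMeasurable.restrict
    rw [ae_restrict_iff' measurableSet_Ioc]
    refine ae_of_all _ fun τ hτ => ?_
    rw [Real.norm_eq_abs, abs_of_nonneg (div_nonneg (Real.exp_pos _).le (Real.sqrt_nonneg _))]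
    exact hbound_near τ hτ
  have hbound_far : ∀ τ ∈ Ioi (a+1), g τ ≤ (Real.sqrt c)⁻¹ * Real.exp (-(mu/2) * τ) := by
    intro τ hτ
    have h1 : c ≤ c * τ - r := by
      have hτ' : a + 1 < τ := hτ
      have : c * (a + 1) = r + c := by rw [ha_def]; field_simp
      nlinarith
    have h2 : Real.sqrt c ≤ Real.sqrt (c * τ - r) := Real.sqrt_le_sqrt h1
    rw [hg]; simp only [div_eq_mul_inv]
    rw [mul_comm ((Real.sqrt c)⁻¹)]
    apply mul_le_mul_of_nonneg_left _ (Real.exp_pos _).le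
    exact inv_anti₀ (Real.sqrt_pos.mpr hc) h2
  have hexp_far : IntegrableOn (fun τ => (Real.sqrt c)⁻¹ * Real.exp (-(mu/2) * τ)) (Ioi (a+1)) :=
    (exp_neg_integrableOn_Ioi (a+1) (half_pos hmu)).const_mul _
  have hfar : IntegrableOn g (Ioi (a+1)) := by
    apply Integrable.mono' hexp_far hmeas.aestronglyMeasurable.restrict
    rw [ae_restrict_iff' measurableSet_Ioi]
    refine ae_of_all _ fun τ hτ => ?_
    rw [Real.norm_eq_abs, abs_of_nonneg (div_nonneg (Real.exp_pos _).le (Real.sqrt_nonneg _))]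
    exact hbound_far τ hτ
  have hunion : Ioc a (a+1) ∪ Ioi (a+1) = Ioi a := Ioc_union_Ioi_eq_Ioi (by linarith)
  have hint : IntegrableOn g (Ioi a) := by
    rw [← hunion]; exact hnear.union hfar
  refine ⟨hint, ?_⟩
  rw [← hunion, setIntegral_union (Ioc_disjoint_Ioi le_rfl) measurableSet_Ioi hnear hfar]
  have hgnonneg : ∀ τ, 0 ≤ g τ := fun τ => div_nonneg (Real.exp_pos _).le (Real.sqrt_nonneg _)
  have b1 : ∫ τ in Ioc a (a+1), g τ ≤ c⁻¹ * (2 * Real.sqrt c) := by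
    rw [← auxAval c r hc]
    exact integral_mono_of_nonneg (ae_of_all _ hgnonneg) (auxA c r hc)
      ((ae_restrict_iff' measurableSet_Ioc).mpr (ae_of_all _ hbound_near))
  have b2 : ∫ τ in Ioi (a+1), g τ ≤ (Real.sqrt c)⁻¹ * (2/mu) := by
    have step1 : ∫ τ in Ioi (a+1), g τ ≤ ∫ τ in Ioi (a+1), (Real.sqrt c)⁻¹ * Real.exp (-(mu/2) * τ) := by
      exact integral_mono_of_nonneg (ae_of_all _ hgnonneg) hexp_far
        ((ae_restrict_iff' measurableSet_Ioi).mpr (ae_of_all _ hbound_far))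
    have step2 : ∫ τ in Ioi (a+1), (Real.sqrt c)⁻¹ * Real.exp (-(mu/2) * τ)
        ≤ ∫ τ in Ioi (0:ℝ), (Real.sqrt c)⁻¹ * Real.exp (-(mu/2) * τ) := by
      apply setIntegral_mono_set ((exp_neg_integrableOn_Ioi 0 (half_pos hmu)).const_mul _)
      · exact ae_of_all _ fun τ => mul_nonneg (inv_nonneg.mpr (Real.sqrt_nonneg _)) (Real.exp_pos _).le
      · exact HasSubset.Subset.eventuallyLE (Ioi_subset_Ioi (by linarith))
    have step3 : ∫ τ in Ioi (0:ℝ), (Real.sqrt c)⁻¹ * Real.exp (-(mu/2) * τ)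
        = (Real.sqrt c)⁻¹ * (2/mu) := by
      rw [integral_const_mul]
      congr 1
      have : ∀ τ : ℝ, Real.exp (-(mu/2) * τ) = (fun u => Real.exp (-u)) ((mu/2) * τ) := by
        intro τ; simp [neg_mul]
      simp_rw [this]
      rw [integral_comp_mul_left_Ioi (fun u => Real.exp (-u)) 0 (half_pos hmu)]
      simp [integral_exp_neg_Ioi_zero, integral_exp_Iic_zero]
    linarith
  linarith

lemma auxF_bound (c lam mu r : ℝ) (hc : 0 < c) (hlam : 0 < lam) (hmu : 0 < mu) (hr : 0 < r) :
    ∀ τ ∈ Ioi (r/c),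
      Real.exp (-(lam + mu) * τ) *
        (Real.exp ((lam / c) * Real.sqrt (c ^ 2 * τ ^ 2 - r ^ 2)) /
          Real.sqrt (c ^ 2 * τ ^ 2 - r ^ 2))
      ≤ (Real.sqrt r)⁻¹ * Real.exp (-(mu/2) * (r/c)) *
          (Real.exp (-(mu/2) * τ) / Real.sqrt (c * τ - r)) := by
  intro τ hτ
  have hτ' : r / c < τ := hτ
  have hcτ : r < c * τ := by rwa [div_lt_iff₀ hc, mul_comm] at hτ'
  have hτpos : 0 < τ := lt_trans (div_pos hr hc) hτ'
  have hd : 0 < c * τ - r := by linarith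
  set S := Real.sqrt (c ^ 2 * τ ^ 2 - r ^ 2) with hS
  have hsq : 0 < c ^ 2 * τ ^ 2 - r ^ 2 := by nlinarith
  have hSpos : 0 < S := Real.sqrt_pos.mpr hsq
  have hlow : Real.sqrt r * Real.sqrt (c * τ - r) ≤ S := by
    rw [← Real.sqrt_mul hr.le]
    apply Real.sqrt_le_sqrt
    nlinarith
  have hlowpos : 0 < Real.sqrt r * Real.sqrt (c * τ - r) :=
    mul_pos (Real.sqrt_pos.mpr hr) (Real.sqrt_pos.mpr hd)
  have hup : S ≤ c * τ := by
    rw [hS]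
    have : c ^ 2 * τ ^ 2 - r ^ 2 ≤ (c * τ) ^ 2 := by nlinarith
    calc Real.sqrt (c ^ 2 * τ ^ 2 - r ^ 2) ≤ Real.sqrt ((c * τ) ^ 2) := Real.sqrt_le_sqrt this
      _ = c * τ := Real.sqrt_sq (by positivity)
  have hexp_up : Real.exp ((lam / c) * S) ≤ Real.exp (lam * τ) := by
    apply Real.exp_le_exp.mpr
    calc (lam / c) * S ≤ (lam / c) * (c * τ) := by
          apply mul_le_mul_of_nonneg_left hup (by positivity)
      _ = lam * τ := by field_simp
  calc Real.exp (-(lam + mu) * τ) * (Real.exp ((lam / c) * S) / S)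
      = Real.exp (-(lam + mu) * τ) * Real.exp ((lam / c) * S) / S := by ring
    _ ≤ Real.exp (-(lam + mu) * τ) * Real.exp (lam * τ) / (Real.sqrt r * Real.sqrt (c * τ - r)) := by
        apply div_le_div₀ (by positivity) _ hlowpos hlow
        exact mul_le_mul_of_nonneg_left hexp_up (Real.exp_pos _).le
    _ = Real.exp (-mu * τ) / (Real.sqrt r * Real.sqrt (c * τ - r)) := by
        rw [← Real.exp_add]; ring_nf
    _ = (Real.sqrt r)⁻¹ * (Real.exp (-(mu/2) * τ) * Real.exp (-(mu/2) * τ) / Real.sqrt (c * τ - r)) := by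
        rw [← Real.exp_add]; ring_nf
    _ ≤ (Real.sqrt r)⁻¹ * (Real.exp (-(mu/2) * (r/c)) * Real.exp (-(mu/2) * τ) / Real.sqrt (c * τ - r)) := by
        apply mul_le_mul_of_nonneg_left _ (by positivity)
        apply (div_le_div_iff_of_pos_right (Real.sqrt_pos.mpr hd)).mpr
        apply mul_le_mul_of_nonneg_right _ (Real.exp_pos _).le
        apply Real.exp_le_exp.mpr
        nlinarith [le_of_lt hτ', div_pos hr hc]
    _ = (Real.sqrt r)⁻¹ * Real.exp (-(mu/2) * (r/c)) * (Real.exp (-(mu/2) * τ) / Real.sqrt (c * τ - r)) := by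
        ring

theorem stmt17 (c lam mu : ℝ) (hc : 0 < c) (hlam : 0 < lam) (hmu : 0 < mu)
    (F : ℝ → ℝ)
    (hF : ∀ r, F r = ∫ τ in Ioi (r / c),
        Real.exp (-(lam + mu) * τ) *
          (Real.exp ((lam / c) * Real.sqrt (c ^ 2 * τ ^ 2 - r ^ 2)) /
            Real.sqrt (c ^ 2 * τ ^ 2 - r ^ 2))) :
    Tendsto F atTop (nhds 0) ∧ Tendsto F (nhdsWithin 0 (Ioi 0)) atTop := by
  set B : ℝ := c⁻¹ * (2 * Real.sqrt c) + (Real.sqrt c)⁻¹ * (2/mu) with hB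
  have hBpos : 0 ≤ B := by
    have := Real.sqrt_nonneg c
    positivity
  -- integrand and its basic properties
  set f : ℝ → ℝ → ℝ := fun r τ =>
    Real.exp (-(lam + mu) * τ) *
      (Real.exp ((lam / c) * Real.sqrt (c ^ 2 * τ ^ 2 - r ^ 2)) /
        Real.sqrt (c ^ 2 * τ ^ 2 - r ^ 2)) with hf
  have hf_nonneg : ∀ r τ, 0 ≤ f r τ := fun r τ =>
    mul_nonneg (Real.exp_pos _).le (div_nonneg (Real.exp_pos _).le (Real.sqrt_nonneg _))
  have hf_meas : ∀ r, Measurable (f r) := by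
    intro r
    apply Measurable.mul (by fun_prop)
    apply Measurable.div
    · apply Real.measurable_exp.comp
      apply Measurable.const_mul
      exact ((measurable_const.mul (measurable_id'.pow_const 2)).sub_const _).sqrt
    · exact ((measurable_const.mul (measurable_id'.pow_const 2)).sub_const _).sqrt
  have key : ∀ r : ℝ, 0 < r → IntegrableOn (f r) (Ioi (r/c)) ∧
      F r ≤ (Real.sqrt r)⁻¹ * Real.exp (-(mu/2) * (r/c)) * B := by
    intro r hr
    obtain ⟨hGint, hGval⟩ := auxG c mu r hc hmu hr
    set K : ℝ := (Real.sqrt r)⁻¹ * Real.exp (-(mu/2) * (r/c)) with hK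
    have hKpos : 0 ≤ K := by positivity
    have hdom : IntegrableOn (fun τ => K * (Real.exp (-(mu/2) * τ) / Real.sqrt (c * τ - r)))
        (Ioi (r/c)) := hGint.const_mul K
    have hb := auxF_bound c lam mu r hc hlam hmu hr
    have hint : IntegrableOn (f r) (Ioi (r/c)) := by
      apply Integrable.mono' hdom (hf_meas r).aestronglyMeasurable.restrict
      rw [ae_restrict_iff' measurableSet_Ioi]
      refine ae_of_all _ fun τ hτ => ?_
      rw [Real.norm_eq_abs, abs_of_nonneg (hf_nonneg r τ)]
      exact hb τ hτ
    refine ⟨hint, ?_⟩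
    rw [hF r]
    calc (∫ τ in Ioi (r/c), f r τ)
        ≤ ∫ τ in Ioi (r/c), K * (Real.exp (-(mu/2) * τ) / Real.sqrt (c * τ - r)) :=
          integral_mono_of_nonneg (ae_of_all _ fun τ => hf_nonneg r τ) hdom
            ((ae_restrict_iff' measurableSet_Ioi).mpr (ae_of_all _ hb))
      _ = K * ∫ τ in Ioi (r/c), Real.exp (-(mu/2) * τ) / Real.sqrt (c * τ - r) :=
          integral_const_mul K _
      _ ≤ K * B := mul_le_mul_of_nonneg_left hGval hKpos
  have hF_nonneg : ∀ r, 0 ≤ F r := by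
    intro r
    rw [hF r]
    exact integral_nonneg fun τ => hf_nonneg r τ
  constructor
  · -- r → ∞
    apply squeeze_zero' (Eventually.of_forall hF_nonneg)
    · filter_upwards [eventually_ge_atTop (1:ℝ)] with r hr
      have hr0 : (0:ℝ) < r := by linarith
      have h1 : F r ≤ (Real.sqrt r)⁻¹ * Real.exp (-(mu/2) * (r/c)) * B := (key r hr0).2
      have h2 : (Real.sqrt r)⁻¹ ≤ 1 := by
        rw [inv_le_one_iff₀]
        right
        simpa using Real.one_le_sqrt.mpr hr
      calc F r ≤ (Real.sqrt r)⁻¹ * Real.exp (-(mu/2) * (r/c)) * B := h1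
        _ ≤ 1 * Real.exp (-(mu/2) * (r/c)) * B := by
            apply mul_le_mul_of_nonneg_right _ hBpos
            exact mul_le_mul_of_nonneg_right h2 (Real.exp_pos _).le
        _ = Real.exp (-(mu/(2*c)) * r) * B := by rw [one_mul]; congr 1; ring_nf
    · have h1 : Tendsto (fun r : ℝ => (mu/(2*c)) * r) atTop atTop :=
        Tendsto.const_mul_atTop (by positivity) tendsto_id
      have h2 : Tendsto (fun r : ℝ => -(mu/(2*c)) * r) atTop atBot := by
        have := tendsto_neg_atTop_atBot.comp h1
        simpa [Function.comp_def, neg_mul] using this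
      have h3 : Tendsto (fun r : ℝ => Real.exp (-(mu/(2*c)) * r)) atTop (nhds 0) :=
        Real.tendsto_exp_atBot.comp h2
      simpa using h3.mul_const B
  · -- r → 0⁺
    set E : ℝ := Real.exp (-(lam + mu)) / c with hE
    have hEpos : 0 < E := by positivity
    have lower : ∀ r : ℝ, 0 < r → r < c → E * (Real.log c - Real.log r) ≤ F r := by
      intro r hr hrc
      have ha : 0 < r / c := div_pos hr hc
      have ha1 : r / c < 1 := (div_lt_one hc).mpr hrc
      set a := r / c
      set l : ℝ → ℝ := fun τ => Real.exp (-(lam + mu)) * (1 / (c * τ)) with hl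
      have hl_le : ∀ τ ∈ Ioc a 1, l τ ≤ f r τ := by
        intro τ hτ
        have hτa : a < τ := hτ.1
        have hτ1 : τ ≤ 1 := hτ.2
        have hτpos : 0 < τ := lt_trans ha hτa
        have hcτ : r < c * τ := by
          have := (div_lt_iff₀ hc).mp hτa; linarith
        have hsq : 0 < c ^ 2 * τ ^ 2 - r ^ 2 := by nlinarith
        set S := Real.sqrt (c ^ 2 * τ ^ 2 - r ^ 2) with hS
        have hSpos : 0 < S := Real.sqrt_pos.mpr hsq
        have hup : S ≤ c * τ := by
          rw [hS]
          calc Real.sqrt (c ^ 2 * τ ^ 2 - r ^ 2) ≤ Real.sqrt ((c * τ) ^ 2) :=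
                Real.sqrt_le_sqrt (by nlinarith)
            _ = c * τ := Real.sqrt_sq (by positivity)
        have e1 : Real.exp (-(lam + mu)) ≤ Real.exp (-(lam + mu) * τ) := by
          apply Real.exp_le_exp.mpr; nlinarith
        have e2 : (1:ℝ) ≤ Real.exp ((lam / c) * S) := by
          rw [← Real.exp_zero]
          apply Real.exp_le_exp.mpr
          positivity
        have e3 : 1 / (c * τ) ≤ 1 / S := by
          apply one_div_le_one_div_of_le hSpos hup
        calc l τ = Real.exp (-(lam + mu)) * (1 * (1 / (c * τ))) := by rw [hl]; ring
          _ ≤ Real.exp (-(lam + mu) * τ) * (Real.exp ((lam / c) * S) * (1 / S)) := by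
              apply mul_le_mul e1 _ (by positivity) (Real.exp_pos _).le
              apply mul_le_mul e2 e3 (by positivity) (Real.exp_pos _).le
          _ = f r τ := by rw [hf]; simp only; rw [hS]; ring
      have hl_int : IntegrableOn l (Ioc a 1) := by
        have : IntervalIntegrable l volume a 1 := by
          apply IntervalIntegrable.const_mul
          apply intervalIntegral.intervalIntegrable_one_div
          · intro x hx
            rw [uIcc_of_le ha1.le] at hx
            have : 0 < x := lt_of_lt_of_le ha hx.1
            positivity
          · fun_prop
        exact (intervalIntegrable_iff_integrableOn_Ioc_of_le ha1.le).mp this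
      have hf_int : IntegrableOn (f r) (Ioi a) := (key r hr).1
      have hf_int' : IntegrableOn (f r) (Ioc a 1) :=
        hf_int.mono_set Ioc_subset_Ioi_self
      have step1 : ∫ τ in Ioc a 1, l τ ≤ ∫ τ in Ioc a 1, f r τ :=
        setIntegral_mono_on hl_int hf_int' measurableSet_Ioc hl_le
      have step2 : ∫ τ in Ioc a 1, f r τ ≤ ∫ τ in Ioi a, f r τ := by
        apply setIntegral_mono_set hf_int
        · exact ae_of_all _ fun τ => hf_nonneg r τ
        · exact HasSubset.Subset.eventuallyLE Ioc_subset_Ioi_self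
      have hval : ∫ τ in Ioc a 1, l τ = E * (Real.log c - Real.log r) := by
        rw [← intervalIntegral.integral_of_le ha1.le]
        rw [intervalIntegral.integral_const_mul]
        have : ∀ τ : ℝ, 1 / (c * τ) = c⁻¹ * (1 / τ) := by
          intro τ; rw [one_div, mul_inv, ← one_div]; ring
        simp_rw [this]
        rw [intervalIntegral.integral_const_mul]
        rw [integral_one_div (by
          intro h
          rw [uIcc_of_le ha1.le] at h
          exact absurd h.1 (not_le.mpr ha))]
        rw [hE]
        rw [show (1:ℝ) / a = c / r from one_div_div r c]
        rw [Real.log_div hc.ne' hr.ne']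
        ring
      rw [hF r]
      calc E * (Real.log c - Real.log r) = ∫ τ in Ioc a 1, l τ := hval.symm
        _ ≤ ∫ τ in Ioc a 1, f r τ := step1
        _ ≤ ∫ τ in Ioi a, f r τ := step2
    have hphi : Tendsto (fun r : ℝ => E * (Real.log c - Real.log r)) (nhdsWithin 0 (Ioi 0)) atTop := by
      apply Tendsto.const_mul_atTop hEpos
      have h1 : Tendsto (fun r : ℝ => -Real.log r) (nhdsWithin 0 (Ioi 0)) atTop :=
        tendsto_neg_atBot_atTop.comp Real.tendsto_log_nhdsGT_zero
      simpa [sub_eq_add_neg] using tendsto_atTop_add_const_left _ (Real.log c) h1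
    apply tendsto_atTop_mono' _ _ hphi
    filter_upwards [Ioo_mem_nhdsGT_of_mem (by constructor <;> [exact le_refl 0; exact hc] : (0:ℝ) ∈ Ico 0 c)] with r hr
    exact lower r hr.1 hr.2
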